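/- Let Ω, Ω₁, …, Ωₙ be nonempty closed convex subsets of ℝˢ with Ωᵢ ∩ Ω = ∅ for all i, let x̄ ∈ Ω, and set aᵢ(x̄) = (x̄ − Π(x̄;Ωᵢ))/d(x̄;Ωᵢ). Suppose N(x̄;Ω) = L^⊥ where L = span{u₁, …, u_m} with nonzero vectors u₁, …, u_m. Then x̄ is an optimal solution of the generalized Heron problem (D(x̄) ≤ D(x) for all x ∈ Ω, D(x) = ∑_{i=1}^n d(x;Ωᵢ)) if and only if ∑_{i=1}^n cos(aᵢ(x̄), u_j) = 0 for all j = 1, …, m. -/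

import Mathlib

open Metric

private lemma real_quad_aux (d N i nw : ℝ) (hd : 0 < d) (hN : 0 ≤ N)
    (hsq : N ^ 2 = d ^ 2 + 2 * i + nw ^ 2) (hcs : |i| ≤ d * nw) :
    N ≤ d + i / d + nw ^ 2 / (2 * d) := by
  have habs := abs_le.mp hcs
  obtain ⟨R, hR⟩ : ∃ R : ℝ, d + i / d + nw ^ 2 / (2 * d) = R := ⟨_, rfl⟩
  rw [hR]
  have hnw : 0 ≤ nw := by nlinarith [abs_nonneg i]
  have hmul : R * (2 * d) = 2 * d ^ 2 + 2 * i + nw ^ 2 := by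
    rw [← hR]; field_simp
  have hmul0 : 0 ≤ R * (2 * d) := by nlinarith [sq_nonneg (d - nw)]
  have hR0 : 0 ≤ R := by
    have := div_nonneg hmul0 (by positivity : (0:ℝ) ≤ 2 * d)
    rwa [mul_div_cancel_right₀ _ (by positivity : (2 * d : ℝ) ≠ 0)] at this
  have key : R ^ 2 - N ^ 2 = (i / d + nw ^ 2 / (2 * d)) ^ 2 := by
    rw [← hR, hsq]; field_simp; ring
  have hsqle : N ^ 2 ≤ R ^ 2 := by
    nlinarith [sq_nonneg (i / d + nw ^ 2 / (2 * d))]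
  calc N = Real.sqrt (N ^ 2) := (Real.sqrt_sq hN).symm
    _ ≤ Real.sqrt (R ^ 2) := Real.sqrt_le_sqrt hsqle
    _ = R := Real.sqrt_sq hR0

private lemma norm_add_le_quad {E : Type*} [NormedAddCommGroup E] [InnerProductSpace ℝ E]
    (v w : E) (hv : v ≠ 0) :
    ‖v + w‖ ≤ ‖v‖ + (inner ℝ v w : ℝ) / ‖v‖ + ‖w‖ ^ 2 / (2 * ‖v‖) := by
  exact real_quad_aux ‖v‖ ‖v + w‖ (inner ℝ v w) ‖w‖ (norm_pos_iff.mpr hv)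
    (norm_nonneg _) (norm_add_sq_real v w) (abs_real_inner_le_norm v w)

/-- Corollary 3.4: if `N(xbar; Ω) = L^⊥` where `L = span{u₁, …, u_m}` with nonzero
generators, and `Ωᵢ ∩ Ω = ∅` for all `i`, then `xbar` is optimal for the generalized
Heron problem iff `∑ i, cos(aᵢ(xbar), u_j) = 0` for all `j = 1, …, m`. -/
theorem heron_optimal_iff_cos_generators {s n m : ℕ}
    (Ω : Set (EuclideanSpace ℝ (Fin s))) (Ωs : Fin n → Set (EuclideanSpace ℝ (Fin s)))
    (hΩne : Ω.Nonempty) (hΩcl : IsClosed Ω) (hΩcv : Convex ℝ Ω)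
    (hne : ∀ i, (Ωs i).Nonempty) (hcl : ∀ i, IsClosed (Ωs i)) (hcv : ∀ i, Convex ℝ (Ωs i))
    (hdisj : ∀ i, Ωs i ∩ Ω = ∅)
    (xbar : EuclideanSpace ℝ (Fin s)) (hxbar : xbar ∈ Ω)
    (p : Fin n → EuclideanSpace ℝ (Fin s))
    (hp : ∀ i, p i ∈ Ωs i ∧ dist xbar (p i) = Metric.infDist xbar (Ωs i))
    (a : Fin n → EuclideanSpace ℝ (Fin s))
    (ha : ∀ i, a i = (Metric.infDist xbar (Ωs i))⁻¹ • (xbar - p i))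
    (u : Fin m → EuclideanSpace ℝ (Fin s)) (hu : ∀ j, u j ≠ 0)
    (L : Submodule ℝ (EuclideanSpace ℝ (Fin s))) (hLspan : L = Submodule.span ℝ (Set.range u))
    (hN : {v : EuclideanSpace ℝ (Fin s) | ∀ x ∈ Ω, (inner ℝ v (x - xbar) : ℝ) ≤ 0}
        = {v : EuclideanSpace ℝ (Fin s) | ∀ w ∈ L, (inner ℝ v w : ℝ) = 0}) :
    (∀ x ∈ Ω, ∑ i, Metric.infDist xbar (Ωs i) ≤ ∑ i, Metric.infDist x (Ωs i)) ↔
      (∀ j, ∑ i, (inner ℝ (a i) (u j) : ℝ) / (‖a i‖ * ‖u j‖) = 0) := by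
  -- positivity of distances
  have hxout : ∀ i, xbar ∉ Ωs i := by
    intro i h
    exact Set.eq_empty_iff_forall_notMem.mp (hdisj i) xbar ⟨h, hxbar⟩
  have hdpos : ∀ i, 0 < Metric.infDist xbar (Ωs i) := fun i =>
    ((hcl i).notMem_iff_infDist_pos (hne i)).mp (hxout i)
  have hdne : ∀ i, Metric.infDist xbar (Ωs i) ≠ 0 := fun i => (hdpos i).ne'
  have hnormv : ∀ i, ‖xbar - p i‖ = Metric.infDist xbar (Ωs i) := by
    intro i; rw [← dist_eq_norm]; exact (hp i).2
  have hvne : ∀ i, xbar - p i ≠ 0 := by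
    intro i h
    have := hnormv i
    rw [h, norm_zero] at this
    exact absurd this.symm (hdne i)
  have hanorm : ∀ i, ‖a i‖ = 1 := by
    intro i
    rw [ha i, norm_smul, hnormv i, Real.norm_eq_abs, abs_inv,
      abs_of_pos (hdpos i), inv_mul_cancel₀ (hdne i)]
  -- projection variational inequality
  have hVI : ∀ i, ∀ q ∈ Ωs i, (inner ℝ (xbar - p i) (q - p i) : ℝ) ≤ 0 := by
    intro i
    have hinf : ‖xbar - p i‖ = ⨅ w : Ωs i, ‖xbar - (w : EuclideanSpace ℝ (Fin s))‖ := by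
      rw [hnormv i, infDist_eq_iInf]
      simp only [dist_eq_norm]
    exact (norm_eq_iInf_iff_real_inner_le_zero (hcv i) (hp i).1).mp hinf
  obtain ⟨S, hS⟩ : ∃ S : EuclideanSpace ℝ (Fin s), S = ∑ i, a i := ⟨_, rfl⟩
  have hSum : ∀ w : EuclideanSpace ℝ (Fin s),
      (inner ℝ S w : ℝ) = ∑ i, (inner ℝ (a i) w : ℝ) := by
    intro w; rw [hS]; exact sum_inner _ _ _
  have hav : ∀ i, (inner ℝ (a i) (xbar - p i) : ℝ) = Metric.infDist xbar (Ωs i) := by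
    intro i
    rw [ha i, real_inner_smul_left, real_inner_self_eq_norm_sq, hnormv i, pow_two,
      ← mul_assoc, inv_mul_cancel₀ (hdne i), one_mul]
  have hinner : ∀ i (w : EuclideanSpace ℝ (Fin s)),
      (inner ℝ (xbar - p i) w : ℝ) = Metric.infDist xbar (Ωs i) * (inner ℝ (a i) w : ℝ) := by
    intro i w
    rw [ha i, real_inner_smul_left, ← mul_assoc, mul_inv_cancel₀ (hdne i), one_mul]
  -- Step A: optimality ↔ ∀ x ∈ Ω, 0 ≤ ⟪S, x - xbar⟫
  have stepA : (∀ x ∈ Ω, ∑ i, Metric.infDist xbar (Ωs i) ≤ ∑ i, Metric.infDist x (Ωs i)) ↔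
      (∀ x ∈ Ω, 0 ≤ (inner ℝ S (x - xbar) : ℝ)) := by
    constructor
    · intro hopt x hx
      obtain ⟨h, hh⟩ : ∃ h : EuclideanSpace ℝ (Fin s), h = x - xbar := ⟨_, rfl⟩
      rw [← hh]
      obtain ⟨C, hC⟩ : ∃ C : ℝ, C = ∑ i, ‖h‖ ^ 2 / (2 * Metric.infDist xbar (Ωs i)) :=
        ⟨_, rfl⟩
      have hC0 : 0 ≤ C := by
        rw [hC]
        exact Finset.sum_nonneg fun i _ => div_nonneg (sq_nonneg _) (by linarith [hdpos i])
      have key : ∀ t : ℝ, 0 < t → t ≤ 1 →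
          0 ≤ t * (inner ℝ S h : ℝ) + t ^ 2 * C := by
        intro t ht0 ht1
        have hxt : xbar + t • h ∈ Ω := by
          have := hΩcv hxbar hx (by linarith : (0:ℝ) ≤ 1 - t) ht0.le (by ring)
          convert this using 1
          rw [hh]
          module
        have h1 : ∑ i, Metric.infDist xbar (Ωs i)
            ≤ ∑ i, Metric.infDist (xbar + t • h) (Ωs i) := hopt _ hxt
        have h2 : ∑ i, Metric.infDist (xbar + t • h) (Ωs i) ≤
            ∑ i, (Metric.infDist xbar (Ωs i) + t * (inner ℝ (a i) h : ℝ)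
              + t ^ 2 * (‖h‖ ^ 2 / (2 * Metric.infDist xbar (Ωs i)))) := by
          apply Finset.sum_le_sum
          intro i _
          have hle1 : Metric.infDist (xbar + t • h) (Ωs i) ≤ ‖(xbar - p i) + t • h‖ := by
            have := infDist_le_dist_of_mem (x := xbar + t • h) (hp i).1
            rw [dist_eq_norm] at this
            refine this.trans_eq (congrArg norm ?_)
            abel
          have hle2 := norm_add_le_quad (xbar - p i) (t • h) (hvne i)
          rw [hnormv i, real_inner_smul_right, norm_smul, Real.norm_eq_abs,
            abs_of_pos ht0, mul_pow, hinner i h] at hle2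
          have heq : t * (Metric.infDist xbar (Ωs i) * (inner ℝ (a i) h : ℝ))
              / Metric.infDist xbar (Ωs i) = t * (inner ℝ (a i) h : ℝ) := by
            rw [mul_comm (Metric.infDist xbar (Ωs i)), ← mul_assoc, mul_div_assoc,
              div_self (hdne i), mul_one]
          rw [heq] at hle2
          calc Metric.infDist (xbar + t • h) (Ωs i) ≤ ‖(xbar - p i) + t • h‖ := hle1
            _ ≤ Metric.infDist xbar (Ωs i) + t * (inner ℝ (a i) h : ℝ)
                + t ^ 2 * ‖h‖ ^ 2 / (2 * Metric.infDist xbar (Ωs i)) := hle2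
            _ = Metric.infDist xbar (Ωs i) + t * (inner ℝ (a i) h : ℝ)
                + t ^ 2 * (‖h‖ ^ 2 / (2 * Metric.infDist xbar (Ωs i))) := by ring
        have h3 : ∑ i, (Metric.infDist xbar (Ωs i) + t * (inner ℝ (a i) h : ℝ)
              + t ^ 2 * (‖h‖ ^ 2 / (2 * Metric.infDist xbar (Ωs i))))
            = ∑ i, Metric.infDist xbar (Ωs i) + t * (inner ℝ S h : ℝ) + t ^ 2 * C := by
          rw [hSum, hC, Finset.mul_sum, Finset.mul_sum, ← Finset.sum_add_distrib,
            ← Finset.sum_add_distrib]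
        linarith [h1.trans (h2.trans_eq h3)]
      by_contra hneg
      push_neg at hneg
      rcases eq_or_lt_of_le hC0 with hCz | hCpos
      · have h1 := key 1 one_pos le_rfl
        rw [one_mul, one_pow, one_mul, ← hCz, add_zero] at h1
        linarith
      · obtain ⟨t, htdef⟩ : ∃ t : ℝ, t = min 1 (-(inner ℝ S h : ℝ) / (2 * C)) := ⟨_, rfl⟩
        have ht0 : 0 < t := htdef ▸ lt_min one_pos
          (div_pos (neg_pos.mpr hneg) (by positivity))
        have ht1 : t ≤ 1 := htdef ▸ min_le_left _ _
        have htC : t * C ≤ -(inner ℝ S h : ℝ) / 2 := by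
          have hmin : t ≤ -(inner ℝ S h : ℝ) / (2 * C) := htdef ▸ min_le_right _ _
          calc t * C ≤ (-(inner ℝ S h : ℝ) / (2 * C)) * C :=
                mul_le_mul_of_nonneg_right hmin hC0
            _ = -(inner ℝ S h : ℝ) / 2 := by
                rw [div_mul_eq_mul_div, mul_comm 2 C, ← div_div,
                  mul_div_assoc, div_self hCpos.ne', mul_one]
        have hk := key t ht0 ht1
        nlinarith [mul_le_mul_of_nonneg_left htC ht0.le,
          mul_pos ht0 (neg_pos.mpr hneg)]
    · intro hineq x hx
      have hper : ∀ i, Metric.infDist xbar (Ωs i) + (inner ℝ (a i) (x - xbar) : ℝ)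
          ≤ Metric.infDist x (Ωs i) := by
        intro i
        haveI : Nonempty (Ωs i) := (hne i).to_subtype
        rw [infDist_eq_iInf (x := x) (s := Ωs i)]
        apply le_ciInf
        rintro ⟨q, hq⟩
        have h1 : (inner ℝ (a i) (x - q) : ℝ) ≤ dist x q := by
          rw [dist_eq_norm]
          calc (inner ℝ (a i) (x - q) : ℝ) ≤ ‖a i‖ * ‖x - q‖ := real_inner_le_norm _ _
            _ = ‖x - q‖ := by rw [hanorm i, one_mul]
        have hdec : x - q = (x - xbar) + (xbar - p i) + (p i - q) := by abel
        have h2 : (inner ℝ (a i) (x - q) : ℝ)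
            = (inner ℝ (a i) (x - xbar) : ℝ) + Metric.infDist xbar (Ωs i)
              + (inner ℝ (a i) (p i - q) : ℝ) := by
          rw [hdec, inner_add_right, inner_add_right, hav i]
        have h3 : 0 ≤ (inner ℝ (a i) (p i - q) : ℝ) := by
          rw [ha i, real_inner_smul_left]
          have hflip : (inner ℝ (xbar - p i) (p i - q) : ℝ)
              = -(inner ℝ (xbar - p i) (q - p i) : ℝ) := by
            rw [← inner_neg_right]; congr 1; abel
          rw [hflip]
          have hvi := hVI i q hq
          exact mul_nonneg (inv_nonneg.mpr (hdpos i).le) (by linarith)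
        linarith
      have hsum := Finset.sum_le_sum (fun i (_ : i ∈ Finset.univ) => hper i)
      rw [Finset.sum_add_distrib] at hsum
      have h0 := hineq x hx
      rw [hSum (x - xbar)] at h0
      linarith
  -- Step B: cosine condition ↔ ∀ x ∈ Ω, 0 ≤ ⟪S, x - xbar⟫
  have stepB : (∀ j, ∑ i, (inner ℝ (a i) (u j) : ℝ) / (‖a i‖ * ‖u j‖) = 0) ↔
      (∀ x ∈ Ω, 0 ≤ (inner ℝ S (x - xbar) : ℝ)) := by
    have hcos : ∀ j, (∑ i, (inner ℝ (a i) (u j) : ℝ) / (‖a i‖ * ‖u j‖) = 0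
        ↔ (inner ℝ S (u j) : ℝ) = 0) := by
      intro j
      have hnu : ‖u j‖ ≠ 0 := norm_ne_zero_iff.mpr (hu j)
      have hterm : ∀ i, (inner ℝ (a i) (u j) : ℝ) / (‖a i‖ * ‖u j‖)
          = (inner ℝ (a i) (u j) : ℝ) / ‖u j‖ := by
        intro i; rw [hanorm i, one_mul]
      rw [Finset.sum_congr rfl (fun i _ => hterm i), ← Finset.sum_div, ← hSum,
        div_eq_zero_iff]
      exact or_iff_left hnu
    have hspan : (∀ j, (inner ℝ S (u j) : ℝ) = 0) ↔ (∀ w ∈ L, (inner ℝ S w : ℝ) = 0) := by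
      constructor
      · intro hj w hw
        rw [hLspan] at hw
        induction hw using Submodule.span_induction with
        | mem x hx =>
          obtain ⟨j, rfl⟩ := hx
          exact hj j
        | zero => simp
        | add x y hx hy ihx ihy => rw [inner_add_right, ihx, ihy, add_zero]
        | smul c x hx ihx => rw [real_inner_smul_right, ihx, mul_zero]
      · intro hL j
        apply hL
        rw [hLspan]
        exact Submodule.subset_span ⟨j, rfl⟩
    have hNneg : (∀ w ∈ L, (inner ℝ S w : ℝ) = 0)
        ↔ (∀ x ∈ Ω, (inner ℝ (-S) (x - xbar) : ℝ) ≤ 0) := by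
      constructor
      · intro hL
        have hmem : (-S) ∈ {v : EuclideanSpace ℝ (Fin s) | ∀ w ∈ L, (inner ℝ v w : ℝ) = 0} := by
          intro w hw
          rw [inner_neg_left, hL w hw, neg_zero]
        rw [← hN] at hmem
        exact hmem
      · intro hmem
        have h1 : (-S) ∈ {v : EuclideanSpace ℝ (Fin s)
            | ∀ x ∈ Ω, (inner ℝ v (x - xbar) : ℝ) ≤ 0} := hmem
        rw [hN] at h1
        intro w hw
        have := h1 w hw
        rw [inner_neg_left] at this
        linarith
    constructor
    · intro hj x hx
      have hle := (hNneg.mp (hspan.mp (fun j => (hcos j).mp (hj j)))) x hx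
      rw [inner_neg_left] at hle
      linarith
    · intro hineq j
      apply (hcos j).mpr
      refine hspan.mpr ?_ j
      apply hNneg.mpr
      intro x hx
      rw [inner_neg_left]
      linarith [hineq x hx]
  exact stepA.trans stepB.symm
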